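/- Let Q be a symmetric bilinear form on a finite-dimensional real vector space V and let L : V → ℝ be a nonzero linear functional. Define the symmetric bilinear form B on V ⊕ ℝ by B((v,s),(w,t)) = Q(v,w) + s·L(w) + t·L(v). If Q restricted to ker L is nondegenerate, then B is nondegenerate and the negative index (Morse index) of B equals the negative index of Q restricted to ker L plus 1. -/

import Mathlib

set_option maxHeartbeats 1000000

/-- The negative index (Morse index) of a bilinear form: the maximal dimension of a
subspace on which the form is negative definite. -/
noncomputable def negIndex {V : Type*} [AddCommGroup V] [Module ℝ V]
    (B : LinearMap.BilinForm ℝ V) : ℕ :=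
  sSup {n : ℕ | ∃ W : Submodule ℝ V, Module.finrank ℝ W = n ∧
    ∀ v ∈ W, v ≠ 0 → B v v < 0}

lemma negIndexSet_nonempty' {V : Type*} [AddCommGroup V] [Module ℝ V]
    (B : LinearMap.BilinForm ℝ V) :
    {n : ℕ | ∃ W : Submodule ℝ V, Module.finrank ℝ W = n ∧
      ∀ v ∈ W, v ≠ 0 → B v v < 0}.Nonempty :=
  ⟨0, ⊥, by simp, fun v hv hne => absurd (Submodule.mem_bot ℝ |>.mp hv) hne⟩

lemma negIndexSet_bddAbove' {V : Type*} [AddCommGroup V] [Module ℝ V] [FiniteDimensional ℝ V]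
    (B : LinearMap.BilinForm ℝ V) :
    BddAbove {n : ℕ | ∃ W : Submodule ℝ V, Module.finrank ℝ W = n ∧
      ∀ v ∈ W, v ≠ 0 → B v v < 0} := by
  refine ⟨Module.finrank ℝ V, fun n ⟨W, hW, _⟩ => ?_⟩
  exact hW ▸ Submodule.finrank_le W

lemma negIndex_mem' {V : Type*} [AddCommGroup V] [Module ℝ V] [FiniteDimensional ℝ V]
    (B : LinearMap.BilinForm ℝ V) :
    ∃ W : Submodule ℝ V, Module.finrank ℝ W = negIndex B ∧
      ∀ v ∈ W, v ≠ 0 → B v v < 0 :=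
  Nat.sSup_mem (negIndexSet_nonempty' B) (negIndexSet_bddAbove' B)

lemma negIndex_eq' {V : Type*} [AddCommGroup V] [Module ℝ V]
    (B : LinearMap.BilinForm ℝ V) (m : ℕ)
    (hmem : ∃ W : Submodule ℝ V, Module.finrank ℝ W = m ∧ ∀ v ∈ W, v ≠ 0 → B v v < 0)
    (hub : ∀ n ∈ {n : ℕ | ∃ W : Submodule ℝ V, Module.finrank ℝ W = n ∧
      ∀ v ∈ W, v ≠ 0 → B v v < 0}, n ≤ m) :
    negIndex B = m :=
  le_antisymm (csSup_le ⟨m, hmem⟩ hub) (le_csSup ⟨m, hub⟩ hmem)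

/-- Lower bound construction: a negative definite subspace of dimension `n + 1` for `B`. -/
lemma lagrange_lower_bound {V : Type*} [AddCommGroup V] [Module ℝ V] [FiniteDimensional ℝ V]
    (Q : LinearMap.BilinForm ℝ V) (hQsymm : ∀ v w, Q v w = Q w v)
    (L : V →ₗ[ℝ] ℝ) (hL : L ≠ 0)
    (B : LinearMap.BilinForm ℝ (V × ℝ))
    (hB : ∀ (v w : V) (s t : ℝ), B (v, s) (w, t) = Q v w + s * L w + t * L v)
    (W₀ : Submodule ℝ (LinearMap.ker L)) (n : ℕ)
    (hW₀ : Module.finrank ℝ W₀ = n)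
    (hneg : ∀ v ∈ W₀, v ≠ 0 → (Q.restrict (LinearMap.ker L)) v v < 0) :
    ∃ W : Submodule ℝ (V × ℝ), Module.finrank ℝ W = n + 1 ∧
      ∀ x ∈ W, x ≠ 0 → B x x < 0 := by
  classical
  obtain ⟨x, hx⟩ : ∃ x, L x ≠ 0 := by
    by_contra h
    push_neg at h
    exact hL (LinearMap.ext fun v => by simpa using h v)
  obtain ⟨u, hLu⟩ : ∃ u : V, L u = 1 := ⟨(L x)⁻¹ • x, by simp [inv_mul_cancel₀ hx]⟩
  have hneg' : ∀ w : W₀, w ≠ 0 → Q ((w : LinearMap.ker L) : V) ((w : LinearMap.ker L) : V) < 0 := by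
    intro w hwne
    have hwne' : (w : LinearMap.ker L) ≠ 0 := fun h => hwne (Subtype.ext h)
    have := hneg w w.2 hwne'
    simpa [LinearMap.BilinForm.restrict_apply] using this
  -- orthogonalize u against W₀
  obtain ⟨w₀, horth⟩ : ∃ w₀ : W₀, ∀ w : W₀,
      Q ((w₀ : LinearMap.ker L) : V) ((w : LinearMap.ker L) : V) = Q u ((w : LinearMap.ker L) : V) := by
    set Q'' : LinearMap.BilinForm ℝ W₀ := (Q.restrict (LinearMap.ker L)).restrict W₀ with hQ''
    have hQ''nd : Q''.Nondegenerate := by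
      refine LinearMap.BilinForm.Nondegenerate.ofSeparatingLeft ?_
      intro w hw
      by_contra hw0
      have h1 := hneg' w hw0
      have h2 := hw w
      rw [hQ''] at h2
      simp only [LinearMap.BilinForm.restrict_apply, LinearMap.domRestrict_apply] at h1 h2
      linarith
    set φ : Module.Dual ℝ W₀ := (Q u).comp ((LinearMap.ker L).subtype.comp W₀.subtype) with hφ
    refine ⟨(Q''.toDual hQ''nd).symm φ, fun w => ?_⟩
    have := LinearMap.BilinForm.apply_toDual_symm_apply (B := Q'') (hB := hQ''nd) φ w
    simpa [hQ'', hφ, LinearMap.BilinForm.restrict_apply] using this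
  set u' : V := u - ((w₀ : LinearMap.ker L) : V) with hu'
  have hLu' : L u' = 1 := by
    have h0 : L ((w₀ : LinearMap.ker L) : V) = 0 := (w₀ : LinearMap.ker L).2
    simp [hu', hLu, h0]
  have horth' : ∀ w : W₀, Q u' ((w : LinearMap.ker L) : V) = 0 := by
    intro w
    simp only [hu', map_sub, LinearMap.sub_apply]
    rw [horth w]
    ring
  clear_value u'
  clear hu' horth hLu
  obtain ⟨s₀, hs₀⟩ : ∃ s₀ : ℝ, Q u' u' + 2 * s₀ = -1 := ⟨-(Q u' u' + 1) / 2, by ring⟩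
  set e : V × ℝ := (u', s₀) with he
  have hBee : B e e = -1 := by
    rw [he, hB, hLu']; linarith
  set A : Submodule ℝ (V × ℝ) := (W₀.map (LinearMap.ker L).subtype).map (LinearMap.inl ℝ V ℝ) with hA
  have hAmem : ∀ a ∈ A, a.2 = 0 ∧ L a.1 = 0 ∧ ∃ w : W₀, ((w : LinearMap.ker L) : V) = a.1 := by
    rintro a ⟨b, hb, rfl⟩
    obtain ⟨w, hw, rfl⟩ := hb
    exact ⟨rfl, w.2, ⟨⟨w, hw⟩, rfl⟩⟩
  have hBae : ∀ a ∈ A, B a e = 0 ∧ B e a = 0 := by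
    intro a ha
    obtain ⟨h2, hL1, ⟨w, hw1⟩⟩ := hAmem a ha
    have ha' : a = (a.1, (0:ℝ)) := by rw [← h2]
    have hq1 : Q a.1 u' = 0 := by rw [← hw1, hQsymm, horth' w]
    have hq2 : Q u' a.1 = 0 := by rw [← hw1, horth' w]
    constructor
    · rw [ha', he, hB, hLu', hq1, hL1]; ring
    · rw [ha', he, hB, hq2, hL1]; ring
  have hBaa : ∀ a ∈ A, a ≠ 0 → B a a < 0 := by
    intro a ha hane
    obtain ⟨h2, hL1, ⟨w, hw1⟩⟩ := hAmem a ha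
    have ha' : a = (a.1, (0:ℝ)) := by rw [← h2]
    have hwne : w ≠ 0 := by
      intro h0
      apply hane
      rw [ha', ← hw1, h0]
      simp
    have hq := hneg' w hwne
    rw [hw1] at hq
    rw [ha', hB, hL1]
    linarith
  have hene : e ≠ 0 := by
    intro h0
    rw [he] at h0
    have : u' = 0 := congrArg Prod.fst h0
    rw [this] at hLu'
    simp at hLu'
  have hfinA : Module.finrank ℝ A = n := by
    have e1 := Submodule.equivMapOfInjective (LinearMap.inl ℝ V ℝ) LinearMap.inl_injective
      (W₀.map (LinearMap.ker L).subtype)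
    rw [hA, ← LinearEquiv.finrank_eq e1, Submodule.finrank_map_subtype_eq]
    exact hW₀
  have hdisj : A ⊓ Submodule.span ℝ {e} = ⊥ := by
    rw [eq_bot_iff]
    rintro y ⟨hyA, hyS⟩
    obtain ⟨c, rfl⟩ := Submodule.mem_span_singleton.mp hyS
    obtain ⟨-, hL1, -⟩ := hAmem _ hyA
    have hc : L (c • e).1 = c := by rw [he]; simp [hLu']
    rw [hc] at hL1
    simp [hL1]
  have hfin : Module.finrank ℝ (A ⊔ Submodule.span ℝ {e} : Submodule ℝ (V × ℝ)) = n + 1 := by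
    have h := Submodule.finrank_sup_add_finrank_inf_eq A (Submodule.span ℝ {e})
    rw [hdisj, hfinA, finrank_span_singleton hene] at h
    simpa using h
  refine ⟨A ⊔ Submodule.span ℝ {e}, hfin, ?_⟩
  intro y hy hyne
  obtain ⟨a, ha, z, hz, rfl⟩ := Submodule.mem_sup.mp hy
  obtain ⟨c, rfl⟩ := Submodule.mem_span_singleton.mp hz
  have expand : B (a + c • e) (a + c • e) = B a a + c * (B a e) + c * (B e a) + c * c * (B e e) := by
    simp only [map_add, map_smul, LinearMap.add_apply, LinearMap.smul_apply, smul_eq_mul]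
    ring
  obtain ⟨h1, h2⟩ := hBae a ha
  rw [expand, h1, h2, hBee]
  rcases eq_or_ne c 0 with hc | hc
  · have hane : a ≠ 0 := by
      intro h0; apply hyne; rw [h0, hc]; simp
    have := hBaa a ha hane
    rw [hc]; linarith
  · have haa : B a a ≤ 0 := by
      rcases eq_or_ne a 0 with h0 | h0
      · simp [h0]
      · linarith [hBaa a ha h0]
    nlinarith [mul_self_pos.mpr hc]

/-- Upper bound: from a negative definite subspace for `B`, get one for `Q` on `ker L`
of dimension at least one less. -/
lemma lagrange_upper_bound {V : Type*} [AddCommGroup V] [Module ℝ V] [FiniteDimensional ℝ V]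
    (Q : LinearMap.BilinForm ℝ V)
    (L : V →ₗ[ℝ] ℝ)
    (B : LinearMap.BilinForm ℝ (V × ℝ))
    (hB : ∀ (v w : V) (s t : ℝ), B (v, s) (w, t) = Q v w + s * L w + t * L v)
    (W' : Submodule ℝ (V × ℝ)) (m : ℕ)
    (hW' : Module.finrank ℝ W' = m)
    (hneg : ∀ x ∈ W', x ≠ 0 → B x x < 0) :
    ∃ W : Submodule ℝ (LinearMap.ker L), m ≤ Module.finrank ℝ W + 1 ∧
      ∀ v ∈ W, v ≠ 0 → (Q.restrict (LinearMap.ker L)) v v < 0 := by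
  classical
  set f : (V × ℝ) →ₗ[ℝ] ℝ := L.comp (LinearMap.fst ℝ V ℝ) with hf
  set P : Submodule ℝ (V × ℝ) := W' ⊓ LinearMap.ker f with hP
  have hPker : ∀ y : P, L ((y : V × ℝ)).1 = 0 := fun y => y.2.2
  have hPW' : ∀ y : P, (y : V × ℝ) ∈ W' := fun y => y.2.1
  have hBQ : ∀ y : P, B (y : V × ℝ) (y : V × ℝ) = Q ((y : V × ℝ)).1 ((y : V × ℝ)).1 := by
    intro y
    have hx : (y : V × ℝ) = (((y : V × ℝ)).1, ((y : V × ℝ)).2) := rfl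
    rw [hx, hB, hPker y]
    ring
  have hfst0 : ∀ y : P, ((y : V × ℝ)).1 = 0 → (y : V × ℝ) = 0 := by
    intro y h1
    by_contra hne
    have hlt := hneg _ (hPW' y) hne
    rw [hBQ y, h1] at hlt
    simp at hlt
  set ψ : P →ₗ[ℝ] LinearMap.ker L :=
    LinearMap.codRestrict (LinearMap.ker L)
      ((LinearMap.fst ℝ V ℝ).comp P.subtype) (fun y => hPker y) with hψ
  have hψval : ∀ y : P, ((ψ y : LinearMap.ker L) : V) = ((y : V × ℝ)).1 := fun y => rfl
  have hψinj : Function.Injective ψ := by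
    intro y z hyz
    have h1 : ((y : V × ℝ)).1 = ((z : V × ℝ)).1 := by
      have := congrArg Subtype.val hyz
      rw [hψval y, hψval z] at this
      exact this
    have hd : (y : V × ℝ) - (z : V × ℝ) ∈ P := sub_mem y.2 z.2
    have hd1 : ((y : V × ℝ) - (z : V × ℝ)).1 = 0 := by simp [h1]
    have := hfst0 ⟨_, hd⟩ hd1
    exact Subtype.ext (sub_eq_zero.mp this)
  refine ⟨LinearMap.range ψ, ?_, ?_⟩
  · have hrankψ : Module.finrank ℝ (LinearMap.range ψ) = Module.finrank ℝ P :=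
      LinearMap.finrank_range_of_inj hψinj
    have hrankf := LinearMap.finrank_range_add_finrank_ker f
    have hrangef : Module.finrank ℝ (LinearMap.range f) ≤ 1 := by
      simpa using Submodule.finrank_le (LinearMap.range f)
    have hsup := Submodule.finrank_sup_add_finrank_inf_eq W' (LinearMap.ker f)
    have hsuple : Module.finrank ℝ (W' ⊔ LinearMap.ker f : Submodule ℝ (V × ℝ))
        ≤ Module.finrank ℝ (V × ℝ) := Submodule.finrank_le _
    rw [hW'] at hsup
    rw [hrankψ, hP]
    omega
  · rintro v ⟨y, rfl⟩ hvne
    have hyne : (y : V × ℝ) ≠ 0 := by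
      intro h0
      apply hvne
      have : ((ψ y : LinearMap.ker L) : V) = 0 := by rw [hψval y, h0]; rfl
      exact Subtype.ext this
    have := hneg _ (hPW' y) hyne
    rw [hBQ y] at this
    simp only [LinearMap.BilinForm.restrict_apply]
    rw [← hψval y] at this
    exact this

/-- **Index of the Lagrange multiplier form.** Let `Q` be a symmetric bilinear form on a
finite-dimensional real vector space `V` and `L : V → ℝ` a nonzero linear functional.
Let `B` be the symmetric bilinear form on `V ⊕ ℝ` with
`B ((v,s), (w,t)) = Q v w + s • L w + t • L v`. If the restriction of `Q` to `ker L` is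
nondegenerate, then `B` is nondegenerate and the negative index of `B` equals the negative
index of `Q` restricted to `ker L`, plus one. -/
theorem lagrange_multiplier_negIndex
    {V : Type*} [AddCommGroup V] [Module ℝ V] [FiniteDimensional ℝ V]
    (Q : LinearMap.BilinForm ℝ V) (hQsymm : ∀ v w, Q v w = Q w v)
    (L : V →ₗ[ℝ] ℝ) (hL : L ≠ 0)
    (B : LinearMap.BilinForm ℝ (V × ℝ))
    (hB : ∀ (v w : V) (s t : ℝ), B (v, s) (w, t) = Q v w + s * L w + t * L v)
    (hQnd : (Q.restrict (LinearMap.ker L)).Nondegenerate) :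
    B.Nondegenerate ∧ negIndex B = negIndex (Q.restrict (LinearMap.ker L)) + 1 := by
  obtain ⟨x, hx⟩ : ∃ x, L x ≠ 0 := by
    by_contra h
    push_neg at h
    exact hL (LinearMap.ext fun v => by simpa using h v)
  constructor
  · -- nondegeneracy
    refine LinearMap.BilinForm.Nondegenerate.ofSeparatingLeft ?_
    rintro ⟨v, s⟩ h
    have hv0 : L v = 0 := by
      have := h (0, 1); rw [hB] at this; simpa using this
    have hvK : v ∈ LinearMap.ker L := hv0
    have hv : v = 0 := by
      have key : ∀ w : LinearMap.ker L, (Q.restrict (LinearMap.ker L)) ⟨v, hvK⟩ w = 0 := by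
        intro w
        have := h (↑w, 0)
        rw [hB] at this
        have hw0 : L (w : V) = 0 := w.2
        rw [hw0, hv0] at this
        simpa [LinearMap.BilinForm.restrict_apply] using this
      exact congrArg Subtype.val (hQnd.1 ⟨v, hvK⟩ key)
    have hs : s = 0 := by
      have := h (x, 0)
      rw [hB, hv] at this
      simp [hv0] at this
      rcases this with h1 | h2
      · exact h1
      · exact absurd h2 hx
    simp [hv, hs, Prod.ext_iff]
  · -- index computation
    obtain ⟨W₀, hW₀, hnegW₀⟩ := negIndex_mem' (Q.restrict (LinearMap.ker L))
    apply negIndex_eq'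
    · exact lagrange_lower_bound Q hQsymm L hL B hB W₀ _ hW₀ hnegW₀
    · rintro k ⟨W', hfr, hnegW'⟩
      obtain ⟨W, hle, hnegW⟩ := lagrange_upper_bound Q L B hB W' k hfr hnegW'
      have hmem : Module.finrank ℝ W ∈ {n : ℕ | ∃ W'' : Submodule ℝ (LinearMap.ker L),
          Module.finrank ℝ W'' = n ∧ ∀ v ∈ W'', v ≠ 0 →
            (Q.restrict (LinearMap.ker L)) v v < 0} := ⟨W, rfl, hnegW⟩
      have := le_csSup (negIndexSet_bddAbove' (Q.restrict (LinearMap.ker L))) hmem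
      unfold negIndex
      omega
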